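/- An elementary fusion Q = P|_{A^c} + β P|_A + (1-β)P(A)δ_{μ_A} of a probability measure P satisfies: P is a mean preserving increase in risk of Q, i.e., ∫f dQ ≥ ∫f dP for all concave f: R^d → R. -/

import Mathlib

open MeasureTheory

/-- An elementary fusion Q = P|_{Aᶜ} + β P|_A + (1-β)P(A) δ_{μ_A} of a
probability measure P satisfies ∫ f dQ ≥ ∫ f dP for all concave f : ℝ^d → ℝ, i.e. P is a
mean preserving increase in risk of Q. -/
theorem stmt_4 {d : ℕ}
    (P : Measure (EuclideanSpace ℝ (Fin d))) [IsProbabilityMeasure P]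
    (hPmean : Integrable id P)
    (A : Set (EuclideanSpace ℝ (Fin d))) (hA : MeasurableSet A) (hApos : 0 < P A)
    (β : ℝ) (hβ : β ∈ Set.Icc (0:ℝ) 1)
    (μA : EuclideanSpace ℝ (Fin d)) (hμA : μA = (P A).toReal⁻¹ • ∫ x in A, x ∂P)
    (Q : Measure (EuclideanSpace ℝ (Fin d)))
    (hQ : Q = P.restrict Aᶜ + ENNReal.ofReal β • P.restrict A
      + (ENNReal.ofReal (1 - β) * P A) • Measure.dirac μA)
    (f : EuclideanSpace ℝ (Fin d) → ℝ) (hf : ConcaveOn ℝ Set.univ f)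
    (hfP : Integrable f P) :
    ∫ x, f x ∂P ≤ ∫ x, f x ∂Q := by
  obtain ⟨hβ0, hβ1⟩ := hβ
  have hcont : Continuous f := continuousOn_univ.mp (hf.continuousOn isOpen_univ)
  have hPA_ne_top : P A ≠ ⊤ := (measure_lt_top P A).ne
  have hPA_pos : 0 < (P A).toReal := ENNReal.toReal_pos hApos.ne' hPA_ne_top
  -- Jensen's inequality on P restricted to A
  haveI : IsFiniteMeasure (P.restrict A) := inferInstance
  haveI : NeZero (P.restrict A) := by
    refine ⟨fun h => ?_⟩
    have : P.restrict A Set.univ = 0 := by rw [h]; simp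
    rw [Measure.restrict_apply_univ] at this
    exact hApos.ne' this
  have hidA : Integrable id (P.restrict A) := hPmean.restrict
  have hfA : Integrable f (P.restrict A) := hfP.restrict
  have hjensen : ⨍ x, f x ∂(P.restrict A) ≤ f (⨍ x, x ∂(P.restrict A)) := by
    have := hf.le_map_average (f := id) (hcont.continuousOn) isClosed_univ
      (Filter.Eventually.of_forall fun x => Set.mem_univ _) hidA (by simpa [Function.comp] using hfA)
    simpa using this
  have havg : (⨍ x, x ∂(P.restrict A)) = μA := by
    rw [hμA, average_eq, measureReal_restrict_apply_univ, measureReal_def]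
  have hjensen' : ∫ x in A, f x ∂P ≤ (P A).toReal * f μA := by
    rw [average_eq, measureReal_restrict_apply_univ, measureReal_def, havg, smul_eq_mul] at hjensen
    have := mul_le_mul_of_nonneg_left hjensen (le_of_lt hPA_pos)
    rwa [mul_inv_cancel_left₀ hPA_pos.ne'] at this
  -- compute ∫ f dQ
  have hfAc : Integrable f (P.restrict Aᶜ) := hfP.restrict
  have hfβA : Integrable f (ENNReal.ofReal β • P.restrict A) :=
    hfA.smul_measure ENNReal.ofReal_ne_top
  have hfdirac : Integrable f (Measure.dirac μA) := by
    have hae : ∀ᵐ x ∂(Measure.dirac μA), f x = f μA := by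
      rw [MeasureTheory.ae_dirac_eq]; exact Filter.eventually_pure.2 rfl
    exact (integrable_const (f μA)).congr (by filter_upwards [hae] with x hx; rw [hx])
  have hfsmul : Integrable f ((ENNReal.ofReal (1 - β) * P A) • Measure.dirac μA) :=
    hfdirac.smul_measure (ENNReal.mul_ne_top ENNReal.ofReal_ne_top hPA_ne_top)
  rw [hQ, integral_add_measure (hfAc.add_measure hfβA) hfsmul,
    integral_add_measure hfAc hfβA, integral_smul_measure, integral_smul_measure,
    integral_dirac, ENNReal.toReal_ofReal hβ0, ENNReal.toReal_mul,
    ENNReal.toReal_ofReal (sub_nonneg.2 hβ1), ← integral_add_compl hA hfP]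
  simp only [smul_eq_mul]
  nlinarith [mul_le_mul_of_nonneg_left hjensen' (sub_nonneg.2 hβ1)]
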